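/- Let σ : ℝⁿ → ℝ^{n×m} be of class C¹ with columns σ₁,…,σ_m, let u ∈ C²(ℝⁿ), S(x) = D(∇u σ)(x) σ(x), and let S* and Sᵉ be the symmetric and skew-symmetric parts of S. Then for all a₁, a₂ ∈ ℝᵐ, with f = σ a₁ and g = σ a₂: (i) [f,g](x)·∇u(x) = 2 Sᵉ(x) a₁ · a₂, and Sᵉ(x) has entries (Sᵉ)_{ij}(x) = ½ [σ_j,σ_i](x)·∇u(x); in particular S(x) is symmetric if and only if all Lie brackets [σ_i,σ_j](x), i,j = 1,…,m, are orthogonal to ∇u(x); (ii) the symmetric part is S*(x) = ᵗσ(x) D²u(x) σ(x) + ( ½ (Dσ_j(x) σ_i(x) + Dσ_i(x) σ_j(x)) · ∇u(x) )_{i,j=1,…,m}. -/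

import Mathlib

open Set Filter Metric Matrix MeasureTheory Asymptotics
open scoped RealInnerProductSpace ENNReal Topology

noncomputable section

/-- Euclidean `n`-space. -/
abbrev Euc (n : ℕ) : Type := EuclideanSpace ℝ (Fin n)

/-- The Lie bracket `[f,g](x) = Dg(x) f(x) - Df(x) g(x)`. -/
def lieBracket {n : ℕ} (f g : Euc n → Euc n) (x : Euc n) : Euc n :=
  fderiv ℝ g x (f x) - fderiv ℝ f x (g x)

/-- Second-order Hamiltonian `H_{f,g} u (x) = ∇(∇u·g)(x) · f(x)`. -/
def H2 {n : ℕ} (f g : Euc n → Euc n) (u : Euc n → ℝ) (x : Euc n) : ℝ :=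
  fderiv ℝ (fun y => ⟪gradient u y, g y⟫) x (f x)

/-- Single-switch trajectory with data `(f, g, t, x₀)`: Carathéodory solution following `f`
on `[0,t)` and `g` on `[t,2t]`, starting at `x₀`. -/
def IsSwitchTraj {n : ℕ} (f g : Euc n → Euc n) (t : ℝ) (x₀ : Euc n) (x : ℝ → Euc n) : Prop :=
  x 0 = x₀ ∧ ContinuousOn x (Icc 0 (2 * t)) ∧
    (∀ s ∈ Ioo (0 : ℝ) t, HasDerivAt x (f (x s)) s) ∧
    (∀ s ∈ Ioo t (2 * t), HasDerivAt x (g (x s)) s)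

/-- Piecewise continuity: on every bounded interval, continuity off a finite set. -/
def PiecewiseContinuous {m : ℕ} (a : ℝ → Euc m) : Prop :=
  ∀ T > (0 : ℝ), ∃ D : Finset ℝ, ∀ t ∈ Icc (0 : ℝ) T, t ∉ D → ContinuousAt a t

/-- Admissible control with values in the control set `A`. -/
def IsControl {m : ℕ} (A : Set (Euc m)) (a : ℝ → Euc m) : Prop :=
  (∀ s, a s ∈ A) ∧ PiecewiseContinuous a

/-- Carathéodory trajectory of the control system `ẋ = f(x,a)`. -/
def IsTraj {n m : ℕ} (f : Euc n → Euc m → Euc n) (A : Set (Euc m))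
    (a : ℝ → Euc m) (x : ℝ → Euc n) : Prop :=
  IsControl A a ∧ ContinuousOn x (Ici 0) ∧
    ∀ t : ℝ, 0 ≤ t → x t = x 0 + ∫ s in (0 : ℝ)..t, f (x s) (a s)

/-- Points from which the target `𝒯` can be reached within time `t`. -/
def ReachSet {n m : ℕ} (f : Euc n → Euc m → Euc n) (A : Set (Euc m)) (𝒯 : Set (Euc n))
    (t : ℝ) : Set (Euc n) :=
  {x₀ | ∃ (a : ℝ → Euc m) (x : ℝ → Euc n) (t' : ℝ),
    IsTraj f A a x ∧ x 0 = x₀ ∧ 0 ≤ t' ∧ t' ≤ t ∧ x t' ∈ 𝒯}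

/-- Minimum time function, valued in `ℝ≥0∞`. -/
def minTime {n m : ℕ} (f : Euc n → Euc m → Euc n) (A : Set (Euc m)) (𝒯 : Set (Euc n))
    (x₀ : Euc n) : ℝ≥0∞ :=
  sInf {θ : ℝ≥0∞ | ∃ (a : ℝ → Euc m) (x : ℝ → Euc n) (t : ℝ),
    IsTraj f A a x ∧ x 0 = x₀ ∧ 0 ≤ t ∧ x t ∈ 𝒯 ∧ θ = ENNReal.ofReal t}

/-- Small time local attainability of the target `𝒯` at `xbar`. -/
def STLA {n m : ℕ} (f : Euc n → Euc m → Euc n) (A : Set (Euc m)) (𝒯 : Set (Euc n))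
    (xbar : Euc n) : Prop :=
  ∀ t > (0 : ℝ), xbar ∈ interior (ReachSet f A 𝒯 t)

/-- `C^k` controlled vector field: `C^k` in `x` with spatial derivatives jointly continuous. -/
def VFieldC {n m : ℕ} (k : ℕ) (f : Euc n → Euc m → Euc n) : Prop :=
  (∀ a, ContDiff ℝ k fun x => f x a) ∧
    ∀ i ≤ k, Continuous fun p : Euc n × Euc m => iteratedFDeriv ℝ i (fun x => f x p.2) p.1

/-- The second-order controllability expression
`-D²u(x) f(x,a₁)·f(x,a₂) - (D(f(·,a₁)+f(·,a₂))(x)(f(x,a₁)+f(x,a₂)) + [f(·,a₁),f(·,a₂)](x))·∇u(x)`. -/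
def SOexpr {n m : ℕ} (f : Euc n → Euc m → Euc n) (u : Euc n → ℝ) (x : Euc n)
    (a₁ a₂ : Euc m) : ℝ :=
  -⟪fderiv ℝ (gradient u) x (f x a₁), f x a₂⟫ -
    ⟪gradient u x,
      fderiv ℝ (fun y => f y a₁ + f y a₂) x (f x a₁ + f x a₂) +
        lieBracket (fun y => f y a₁) (fun y => f y a₂) x⟫

/-- The target is reached with a piecewise constant control with at most one switch. -/
def ReachOneSwitch {n m : ℕ} (f : Euc n → Euc m → Euc n) (A : Set (Euc m)) (𝒯 : Set (Euc n))
    (x₀ : Euc n) : Prop :=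
  ∃ a₁ ∈ A, ∃ a₂ ∈ A, ∃ ts tf : ℝ, 0 ≤ ts ∧ ts ≤ tf ∧
    ∃ x : ℝ → Euc n, IsTraj f A (fun s => if s < ts then a₁ else a₂) x ∧ x 0 = x₀ ∧ x tf ∈ 𝒯

/-- The matrix `S(x) = D(∇u σ)(x) σ(x)`, i.e. `S_{ij}(x) = ∇(∇u·σᵢ)(x)·σⱼ(x)`. -/
def Smat {n m : ℕ} (σ : Fin m → Euc n → Euc n) (u : Euc n → ℝ) (x : Euc n) :
    Matrix (Fin m) (Fin m) ℝ :=
  Matrix.of fun i j => fderiv ℝ (fun y => ⟪gradient u y, σ i y⟫) x (σ j x)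

/-- The symmetric block matrix `K = [[S*, ᵗS],[S, S*]]` built from a square matrix `S`. -/
def Kof {m : ℕ} (S : Matrix (Fin m) (Fin m) ℝ) :
    Matrix (Fin m ⊕ Fin m) (Fin m ⊕ Fin m) ℝ :=
  Matrix.fromBlocks ((2 : ℝ)⁻¹ • (S + Sᵀ)) Sᵀ S ((2 : ℝ)⁻¹ • (S + Sᵀ))

/-- The matrix `K(x)` associated to `σ` and `u`. -/
def Kmat {n m : ℕ} (σ : Fin m → Euc n → Euc n) (u : Euc n → ℝ) (x : Euc n) :
    Matrix (Fin m ⊕ Fin m) (Fin m ⊕ Fin m) ℝ :=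
  Kof (Smat σ u x)

/-- Symmetric system vector field `f(x,a) = σ(x) a`. -/
def symF {n m : ℕ} (σ : Fin m → Euc n → Euc n) : Euc n → Euc m → Euc n :=
  fun x a => ∑ j, a j • σ j x

/-- Nonlinear affine system vector field `f(x,a) = σ₀(x) + σ(x) a`. -/
def affF {n m : ℕ} (σ₀ : Euc n → Euc n) (σ : Fin m → Euc n → Euc n) :
    Euc n → Euc m → Euc n :=
  fun x a => σ₀ x + ∑ j, a j • σ j x

end
section Statement10Helpers

lemma grad_contDiff {n : ℕ} {u : Euc n → ℝ} (hu : ContDiff ℝ 2 u) :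
    ContDiff ℝ 1 (gradient u) := by
  have h1 : ContDiff ℝ 1 (fderiv ℝ u) := hu.fderiv_right le_rfl
  exact (((InnerProductSpace.toDual ℝ (Euc n)).symm.toContinuousLinearEquiv
    : _ ≃L[ℝ] _).toContinuousLinearMap.contDiff).comp h1

lemma hess_inner {n : ℕ} (u : Euc n → ℝ) (x v w : Euc n) :
    ⟪fderiv ℝ (gradient u) x v, w⟫ = fderiv ℝ (fderiv ℝ u) x v w := by
  have heq : gradient u = ((InnerProductSpace.toDual ℝ (Euc n)).symm ∘ fderiv ℝ u) := rfl
  rw [heq, LinearIsometryEquiv.comp_fderiv]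
  simp only [ContinuousLinearMap.coe_comp', Function.comp_apply, LinearIsometryEquiv.coe_coe'']
  exact InnerProductSpace.toDual_symm_apply

lemma hess_symm {n : ℕ} {u : Euc n → ℝ} (hu : ContDiff ℝ 2 u) (x v w : Euc n) :
    ⟪fderiv ℝ (gradient u) x v, w⟫ = ⟪fderiv ℝ (gradient u) x w, v⟫ := by
  rw [hess_inner, hess_inner]
  exact (hu.contDiffAt.isSymmSndFDerivAt (by simp)).eq v w

lemma smat_entry {n m : ℕ} (σ : Fin m → Euc n → Euc n) (hσ : ∀ j, ContDiff ℝ 1 (σ j))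
    {u : Euc n → ℝ} (hu : ContDiff ℝ 2 u) (x : Euc n) (i j : Fin m) :
    Smat σ u x i j = ⟪gradient u x, fderiv ℝ (σ i) x (σ j x)⟫
      + ⟪fderiv ℝ (gradient u) x (σ j x), σ i x⟫ := by
  have hg : HasFDerivAt (gradient u) (fderiv ℝ (gradient u) x) x :=
    (((grad_contDiff hu).differentiable one_ne_zero) x).hasFDerivAt
  have hs : HasFDerivAt (σ i) (fderiv ℝ (σ i) x) x :=
    (((hσ i).differentiable one_ne_zero) x).hasFDerivAt
  have h := (hg.inner ℝ hs).fderiv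
  show fderiv ℝ (fun y => ⟪gradient u y, σ i y⟫) x (σ j x) = _
  rw [h]
  simp [fderivInnerCLM_apply]


end Statement10Helpers

/-- Lemma 4.1 (ii)-(iii): the skew-symmetric part `Sᵉ` of `S` expresses the
product of Lie brackets with `∇u`, `S` is symmetric iff all brackets `[σᵢ,σⱼ](x)` are orthogonal
to `∇u(x)`, and the symmetric part `S*` is `ᵗσ D²u σ + (½(Dσⱼσᵢ + Dσᵢσⱼ)·∇u)_{ij}`. -/
theorem statement10 {n m : ℕ} (σ : Fin m → Euc n → Euc n) (hσ : ∀ j, ContDiff ℝ 1 (σ j))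
    (u : Euc n → ℝ) (hu : ContDiff ℝ 2 u) (x : Euc n) :
    (∀ a₁ a₂ : Fin m → ℝ,
      ⟪gradient u x,
          lieBracket (fun y => ∑ j, a₁ j • σ j y) (fun y => ∑ j, a₂ j • σ j y) x⟫ =
        2 * ((2 : ℝ)⁻¹ • (Smat σ u x - (Smat σ u x)ᵀ) *ᵥ a₁ ⬝ᵥ a₂)) ∧
    (∀ i j, ((2 : ℝ)⁻¹ • (Smat σ u x - (Smat σ u x)ᵀ)) i j =
      1 / 2 * ⟪gradient u x, lieBracket (σ j) (σ i) x⟫) ∧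
    ((Smat σ u x).IsSymm ↔ ∀ i j, ⟪gradient u x, lieBracket (σ i) (σ j) x⟫ = 0) ∧
    (∀ i j, ((2 : ℝ)⁻¹ • (Smat σ u x + (Smat σ u x)ᵀ)) i j =
      ⟪σ i x, fderiv ℝ (gradient u) x (σ j x)⟫ +
        1 / 2 * ⟪fderiv ℝ (σ j) x (σ i x) + fderiv ℝ (σ i) x (σ j x), gradient u x⟫) := by
  set g := gradient u x with hgdef
  set T : Fin m → Fin m → ℝ := fun i j => ⟪g, fderiv ℝ (σ i) x (σ j x)⟫ with hT
  have hskew : ∀ i j, Smat σ u x i j - Smat σ u x j i = T i j - T j i := by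
    intro i j
    rw [smat_entry σ hσ hu, smat_entry σ hσ hu, hess_symm hu x (σ j x) (σ i x)]
    ring
  have hlie : ∀ i j, ⟪g, lieBracket (σ j) (σ i) x⟫ = T i j - T j i := by
    intro i j
    rw [lieBracket, inner_sub_right]
  refine ⟨?_, ?_, ?_, ?_⟩
  · intro a₁ a₂
    have hF : ∀ (a : Fin m → ℝ), HasFDerivAt (fun y => ∑ j, a j • σ j y)
        (∑ j, a j • fderiv ℝ (σ j) x) x := by
      intro a
      exact HasFDerivAt.fun_sum fun j _ =>
        ((((hσ j).differentiable one_ne_zero) x).hasFDerivAt).const_smul (a j)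
    have hlb : lieBracket (fun y => ∑ j, a₁ j • σ j y) (fun y => ∑ j, a₂ j • σ j y) x
        = (∑ i, a₂ i • fderiv ℝ (σ i) x) (∑ j, a₁ j • σ j x)
          - (∑ i, a₁ i • fderiv ℝ (σ i) x) (∑ j, a₂ j • σ j x) := by
      rw [lieBracket, (hF a₁).fderiv, (hF a₂).fderiv]
    have expand : ∀ (a b : Fin m → ℝ),
        ⟪g, (∑ i, b i • fderiv ℝ (σ i) x) (∑ j, a j • σ j x)⟫
          = ∑ i, ∑ j, a i * b j * T j i := by
      intro a b
      simp only [ContinuousLinearMap.sum_apply, ContinuousLinearMap.smul_apply, map_sum,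
        _root_.map_smul, inner_sum, real_inner_smul_right, Finset.smul_sum, smul_smul,
        smul_eq_mul]
      rfl
    have hRHS : (2:ℝ) * ((2 : ℝ)⁻¹ • (Smat σ u x - (Smat σ u x)ᵀ) *ᵥ a₁ ⬝ᵥ a₂)
        = ∑ i, ∑ j, a₂ i * a₁ j * (Smat σ u x i j - Smat σ u x j i) := by
      unfold dotProduct Matrix.mulVec dotProduct
      simp only [Matrix.smul_apply, Matrix.sub_apply, Matrix.transpose_apply, smul_eq_mul]
      rw [Finset.mul_sum]
      refine Finset.sum_congr rfl fun i _ => ?_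
      simp only [Pi.smul_apply, smul_eq_mul]
      rw [show ∀ s t : ℝ, 2 * (2⁻¹ * s * t) = s * t from fun s t => by ring, Finset.sum_mul]
      exact Finset.sum_congr rfl fun j _ => by ring
    rw [hlb, inner_sub_right, expand a₁ a₂, expand a₂ a₁, hRHS,
      Finset.sum_comm (f := fun i j => a₁ i * a₂ j * T j i), ← Finset.sum_sub_distrib]
    refine Finset.sum_congr rfl fun i _ => ?_
    rw [← Finset.sum_sub_distrib]
    refine Finset.sum_congr rfl fun j _ => ?_
    rw [hskew i j]
    ring
  · intro i j
    simp only [Matrix.smul_apply, Matrix.sub_apply, Matrix.transpose_apply, smul_eq_mul]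
    rw [hlie i j]
    rw [← hskew i j]; ring
  · rw [Matrix.IsSymm.ext_iff]
    constructor
    · intro h i j
      rw [hlie j i, ← hskew j i, h j i]
      ring
    · intro h i j
      have := hlie i j
      rw [h j i] at this
      have h2 := hskew i j
      linarith [hskew i j, this.symm]
  · intro i j
    simp only [Matrix.smul_apply, Matrix.add_apply, Matrix.transpose_apply, smul_eq_mul]
    rw [smat_entry σ hσ hu, smat_entry σ hσ hu, hess_symm hu x (σ i x) (σ j x),
      real_inner_comm (σ i x) (fderiv ℝ (gradient u) x (σ j x)), inner_add_left,
      real_inner_comm (fderiv ℝ (σ j) x (σ i x)) g, real_inner_comm (fderiv ℝ (σ i) x (σ j x)) g]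
    ring
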